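/- Let q be an odd prime power, F_{q^3}/F_q the cubic extension with trace T(a) = a + a^q + a^{q^2} and norm N(a) = a^{1+q+q^2}. For arbitrary β, γ ∈ F_q there exists s ∈ F_{q^3} \ F_q such that T(s(s+β)) + N(s) = -γ. -/

import Mathlib

/-- Let `q` be an odd prime power, `K` a field with `q` elements and `L/K` the cubic
extension (so `L` has `q³` elements), with trace `T(a) = a + a^q + a^{q²}` and norm
`N(a) = a^{1+q+q²}`. For arbitrary `β, γ ∈ K` there exists `s ∈ L \ K` such that
`T(s(s+β)) + N(s) = -γ`. -/
theorem stmt_4 (p e q : ℕ) (hp : p.Prime) (hq : q = p ^ e) (he : 0 < e) (hodd : Odd q)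
    {K L : Type*} [Field K] [Field L] [Algebra K L] [Fintype K] [Fintype L]
    (hK : Fintype.card K = q) (hL : Fintype.card L = q ^ 3)
    (β γ : K) :
    ∃ s : L, s ∉ Set.range (algebraMap K L) ∧
      ((s * (s + algebraMap K L β)) + (s * (s + algebraMap K L β)) ^ q
          + (s * (s + algebraMap K L β)) ^ (q ^ 2))
        + s ^ (1 + q + q ^ 2) = - algebraMap K L γ := by
  classical
  -- numerics
  have hp2 : 2 ≤ p := hp.two_le
  have hq1 : 1 < q := by
    rw [hq]; exact Nat.one_lt_pow he.ne' (by omega)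
  have hpodd : p ≠ 2 := by
    rintro rfl
    have : Even q := by
      rw [hq]; exact (Nat.even_pow).mpr ⟨even_two, he.ne'⟩
    exact (Nat.not_even_iff_odd.mpr hodd) this
  -- characteristic
  haveI factp : Fact p.Prime := ⟨hp⟩
  have hcharK : CharP K p := by
    obtain ⟨n, hrp, hcard⟩ := FiniteField.card K (ringChar K)
    have hpr : ringChar K = p := by
      have : p ∣ ringChar K ^ (n : ℕ) := by
        rw [← hcard, hK, hq]; exact dvd_pow_self p he.ne'
      have := hp.dvd_of_dvd_pow this
      exact ((Nat.prime_dvd_prime_iff_eq hp hrp).mp this).symm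
    rw [← hpr]; exact ringChar.charP K
  haveI := hcharK
  haveI hcharL : CharP L p := charP_of_injective_algebraMap (algebraMap K L).injective p
  haveI : ExpChar L p := ExpChar.prime hp
  have h2K : (2 : K) ≠ 0 := by
    intro h
    have h2 : ((2 : ℕ) : K) = 0 := by exact_mod_cast h
    have := (CharP.cast_eq_zero_iff K p 2).mp h2
    exact hpodd ((Nat.prime_dvd_prime_iff_eq hp Nat.prime_two).mp this)
  -- fixed points of x ↦ x^q in K
  have hKfix : ∀ x : K, x ^ q = x := by
    intro x; rw [← hK]; exact FiniteField.pow_card x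
  -- elements of L fixed by x ↦ x^q are in the image of K
  have hrange : ∀ x : L, x ^ q = x → x ∈ Set.range (algebraMap K L) := by
    intro x hx
    have hPne : ((Polynomial.X : Polynomial L) ^ q - Polynomial.X) ≠ 0 :=
      FiniteField.X_pow_card_sub_X_ne_zero L hq1
    have hdeg : ((Polynomial.X : Polynomial L) ^ q - Polynomial.X).natDegree = q :=
      FiniteField.X_pow_card_sub_X_natDegree_eq L hq1
    have hsub : (Finset.univ.image (algebraMap K L)) ⊆
        ((Polynomial.X : Polynomial L) ^ q - Polynomial.X).roots.toFinset := by
      intro y hy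
      simp only [Finset.mem_image] at hy
      obtain ⟨k, -, rfl⟩ := hy
      rw [Multiset.mem_toFinset, Polynomial.mem_roots hPne]
      simp only [Polynomial.IsRoot, Polynomial.eval_sub, Polynomial.eval_pow, Polynomial.eval_X]
      rw [sub_eq_zero, ← map_pow, hKfix k]
    have hcard1 : (Finset.univ.image (algebraMap K L)).card = q := by
      rw [Finset.card_image_of_injective _ (algebraMap K L).injective, Finset.card_univ, hK]
    have hcard2 : ((Polynomial.X : Polynomial L) ^ q - Polynomial.X).roots.toFinset.card ≤ q :=
      le_trans (Multiset.toFinset_card_le _) (le_trans (Polynomial.card_roots' _) (le_of_eq hdeg))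
    have heq : Finset.univ.image (algebraMap K L)
        = ((Polynomial.X : Polynomial L) ^ q - Polynomial.X).roots.toFinset :=
      Finset.eq_of_subset_of_card_le hsub (by rw [hcard1]; exact hcard2)
    have hxmem : x ∈ ((Polynomial.X : Polynomial L) ^ q - Polynomial.X).roots.toFinset := by
      rw [Multiset.mem_toFinset, Polynomial.mem_roots hPne]
      simp only [Polynomial.IsRoot, Polynomial.eval_sub, Polynomial.eval_pow, Polynomial.eval_X]
      rw [sub_eq_zero, hx]
    rw [← heq] at hxmem
    simp only [Finset.mem_image] at hxmem
    obtain ⟨k, -, hk⟩ := hxmem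
    exact ⟨k, hk⟩
  -- choose a ∈ K with a² + (β-4)a + (γ+8) ≠ 0
  obtain ⟨a, ha⟩ : ∃ a : K, a ^ 2 + (β - 4) * a + (γ + 8) ≠ 0 := by
    by_contra hcon
    push_neg at hcon
    have h0 := hcon 0
    have h1 := hcon 1
    have hm1 := hcon (-1)
    apply h2K
    linear_combination h1 + hm1 - 2 * h0
  -- choose b ∈ K so that the cubic x³ - a x² + b x + (a² + βa + γ - 2b) has no root in K
  obtain ⟨b, hb⟩ : ∃ b : K, ∀ x : K,
      x ^ 3 - a * x ^ 2 + b * x + (a ^ 2 + β * a + γ - 2 * b) ≠ 0 := by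
    by_contra hcon
    push_neg at hcon
    choose rt hrt using hcon
    have hne2 : ∀ b, rt b ≠ 2 := by
      intro b hb2
      apply ha
      have h := hrt b
      rw [hb2] at h
      linear_combination h
    have hinj : Function.Injective rt := by
      intro b b' hbb
      have h1 := hrt b
      have h2 := hrt b'
      rw [hbb] at h1
      have hfac : (b - b') * (rt b' - 2) = 0 := by linear_combination h1 - h2
      rcases mul_eq_zero.mp hfac with h | h
      · exact sub_eq_zero.mp h
      · exact absurd (sub_eq_zero.mp h) (hne2 b')
    have hinj2 : Function.Injective (fun b => (⟨rt b, hne2 b⟩ : {x : K // x ≠ 2})) :=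
      fun b b' h => hinj (Subtype.mk_eq_mk.mp h)
    have hle := Fintype.card_le_of_injective _ hinj2
    have hcompl : Fintype.card {x : K // x ≠ 2} = Fintype.card K - 1 := by
      rw [Fintype.card_subtype_compl, Fintype.card_subtype_eq]
    rw [hcompl, hK] at hle
    omega
  -- the cubic polynomial
  set c0 : K := a ^ 2 + β * a + γ - 2 * b with hc0
  set P : Polynomial K := Polynomial.X ^ 3 - Polynomial.C a * Polynomial.X ^ 2
      + Polynomial.C b * Polynomial.X + Polynomial.C c0 with hPdef
  have hPmonic : P.Monic := by
    rw [hPdef]; monicity!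
  have hPdeg : P.natDegree = 3 := by
    rw [hPdef]; compute_degree!
  have hProots : P.roots = 0 := by
    rw [Multiset.eq_zero_iff_forall_notMem]
    intro x hx
    rw [Polynomial.mem_roots hPmonic.ne_zero, Polynomial.IsRoot, hPdef] at hx
    simp only [Polynomial.eval_add, Polynomial.eval_sub, Polynomial.eval_mul,
      Polynomial.eval_pow, Polynomial.eval_X, Polynomial.eval_C] at hx
    exact hb x hx
  have hPirr : Irreducible P :=
    (hPmonic.irreducible_iff_roots_eq_zero_of_degree_le_three
      (by omega) (by omega)).mpr hProots
  haveI : Fact (Irreducible P) := ⟨hPirr⟩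
  have hP0 : P ≠ 0 := hPmonic.ne_zero
  -- the field K[X]/(P) has q³ elements, so the root of P satisfies x^(q³) = x
  letI : Fintype (AdjoinRoot P) := Module.fintypeOfFintype (AdjoinRoot.powerBasis hP0).basis
  have hcardM : Fintype.card (AdjoinRoot P) = q ^ 3 := by
    rw [Module.card_fintype (AdjoinRoot.powerBasis hP0).basis, hK]
    congr 1
    simp [AdjoinRoot.powerBasis, hPdeg]
  have hroot3 : (AdjoinRoot.root P) ^ (q ^ 3) = AdjoinRoot.root P := by
    rw [← hcardM]; exact FiniteField.pow_card _
  have hminpoly : minpoly K (AdjoinRoot.root P) = P := by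
    rw [AdjoinRoot.minpoly_root hP0, hPmonic.leadingCoeff, inv_one, Polynomial.C_1, mul_one]
  have hdvd : P ∣ (Polynomial.X ^ q ^ 3 - Polynomial.X : Polynomial K) := by
    rw [← hminpoly]
    apply minpoly.dvd
    simp [map_sub, map_pow, Polynomial.aeval_X, hroot3]
  -- X^(q³) - X splits over L
  have h1L : 1 < q ^ 3 := Nat.one_lt_pow (by norm_num) hq1
  have hLsplits : ((Polynomial.X : Polynomial L) ^ q ^ 3 - Polynomial.X).Splits := by
    rw [Polynomial.splits_iff_card_roots, ← hL, FiniteField.roots_X_pow_card_sub_X,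
      FiniteField.X_pow_card_sub_X_natDegree_eq L (hL ▸ h1L : 1 < Fintype.card L)]
    simp
  have hPmapsplits : (P.map (algebraMap K L)).Splits := by
    apply Polynomial.Splits.of_dvd hLsplits (FiniteField.X_pow_card_sub_X_ne_zero L h1L)
    have := Polynomial.map_dvd (algebraMap K L) hdvd
    simpa using this
  have hsplits : (P.map (algebraMap K L)).Splits := hPmapsplits
  obtain ⟨s, hs⟩ := Polynomial.Splits.exists_eval_eq_zero hsplits
    (by rw [Polynomial.degree_map, Polynomial.degree_eq_natDegree hP0, hPdeg]; decide)
  rw [Polynomial.eval_map] at hs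
  -- abbreviations
  set A : L := algebraMap K L a with hA
  set B : L := algebraMap K L b with hB
  set Cc : L := algebraMap K L c0 with hCcdef
  set β' : L := algebraMap K L β with hβ'
  set γ' : L := algebraMap K L γ with hγ'
  have hseq : s ^ 3 - A * s ^ 2 + B * s + Cc = 0 := by
    rw [hPdef] at hs
    simpa only [Polynomial.eval₂_add, Polynomial.eval₂_sub, Polynomial.eval₂_mul,
      Polynomial.eval₂_pow, Polynomial.eval₂_X, Polynomial.eval₂_C] using hs
  -- s is not in the image of K
  have hsnot : s ∉ Set.range (algebraMap K L) := by
    rintro ⟨k, rfl⟩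
    apply hb k
    have hmap : algebraMap K L (k ^ 3 - a * k ^ 2 + b * k + c0) = 0 := by
      rw [map_add, map_add, map_sub, map_mul, map_mul, map_pow, map_pow]
      exact hseq
    exact (map_eq_zero_iff _ (algebraMap K L).injective).mp hmap
  -- Frobenius
  set f : L →+* L := iterateFrobenius L p e with hfdef
  have hfq : ∀ x : L, f x = x ^ q := by
    intro x; rw [hfdef, iterateFrobenius_def, ← hq]
  have hAq : A ^ q = A := by rw [hA, ← map_pow, hKfix a]
  have hBq : B ^ q = B := by rw [hB, ← map_pow, hKfix b]
  have hCq : Cc ^ q = Cc := by rw [hCcdef, ← map_pow, hKfix c0]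
  have hβq : β' ^ q = β' := by rw [hβ', ← map_pow, hKfix β]
  set t : L := s ^ q with ht
  set u : L := s ^ q ^ 2 with hu
  have htu : t ^ q = u := by
    rw [ht, hu, ← pow_mul, ← pow_two]
  have hmaproot : ∀ x : L, x ^ 3 - A * x ^ 2 + B * x + Cc = 0 →
      (x ^ q) ^ 3 - A * (x ^ q) ^ 2 + B * (x ^ q) + Cc = 0 := by
    intro x hx
    have h := congrArg f hx
    rw [map_zero, map_add, map_add, map_sub, map_mul, map_mul, map_pow, map_pow] at h
    simp only [hfq] at h
    rw [hAq, hBq, hCq] at h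
    exact h
  have hteq : t ^ 3 - A * t ^ 2 + B * t + Cc = 0 := by
    have h := hmaproot s hseq
    rw [← ht] at h
    exact h
  have hueq : u ^ 3 - A * u ^ 2 + B * u + Cc = 0 := by
    have h := hmaproot t hteq
    rw [htu] at h
    exact h
  have hs3 : s ^ q ^ 3 = s := by rw [← hL]; exact FiniteField.pow_card s
  -- distinctness
  have hst : s ≠ t := by
    intro h
    exact hsnot (hrange s h.symm)
  have htu' : t ≠ u := by
    intro h
    apply hst
    have : f s = f t := by rw [hfq, hfq, ← ht, htu]; exact h
    exact f.injective this
  have hsu : s ≠ u := by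
    intro h
    apply hsnot
    apply hrange
    calc s ^ q = u ^ q := by rw [← h]
    _ = s ^ (q ^ 2 * q) := by rw [hu, ← pow_mul]
    _ = s ^ q ^ 3 := by rw [show q ^ 2 * q = q ^ 3 by ring]
    _ = s := hs3
  -- Vieta
  have h1 : (s - t) * (s ^ 2 + s * t + t ^ 2 - A * (s + t) + B) = 0 := by
    linear_combination hseq - hteq
  have h1' : s ^ 2 + s * t + t ^ 2 - A * (s + t) + B = 0 := by
    rcases mul_eq_zero.mp h1 with h | h
    · exact absurd (sub_eq_zero.mp h) hst
    · exact h
  have h2 : (t - u) * (t ^ 2 + t * u + u ^ 2 - A * (t + u) + B) = 0 := by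
    linear_combination hteq - hueq
  have h2' : t ^ 2 + t * u + u ^ 2 - A * (t + u) + B = 0 := by
    rcases mul_eq_zero.mp h2 with h | h
    · exact absurd (sub_eq_zero.mp h) htu'
    · exact h
  have h3 : (s - u) * (s + t + u - A) = 0 := by linear_combination h1' - h2'
  have hsum : s + t + u = A := by
    rcases mul_eq_zero.mp h3 with h | h
    · exact absurd (sub_eq_zero.mp h) hsu
    · exact sub_eq_zero.mp h
  have hB2 : s * t + s * u + t * u = B := by linear_combination (s + t) * hsum - h1'
  have hC2 : s * t * u = -Cc := by linear_combination hseq - s ^ 2 * hsum + s * hB2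
  have hCc : Cc = A ^ 2 + β' * A + γ' - 2 * B := by
    rw [hCcdef, hc0, map_sub, map_add, map_add, map_mul, map_mul, map_pow, map_ofNat]
  -- rewrite the goal
  refine ⟨s, hsnot, ?_⟩
  have hadd : ∀ x y : L, (x + y) ^ q = x ^ q + y ^ q := by
    intro x y
    rw [← hfq, map_add, hfq, hfq]
  have e1 : (s * (s + β')) ^ q = t * (t + β') := by
    rw [mul_pow, hadd, hβq, ← ht]
  have e2 : (s * (s + β')) ^ q ^ 2 = u * (u + β') := by
    have : (s * (s + β')) ^ q ^ 2 = ((s * (s + β')) ^ q) ^ q := by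
      rw [← pow_mul, ← pow_two]
    rw [this, e1, mul_pow, hadd, hβq, htu]
  have e3 : s ^ (1 + q + q ^ 2) = s * t * u := by
    rw [pow_add, pow_add, pow_one, ← ht, ← hu]
  rw [e1, e2, e3]
  linear_combination (s + t + u + A + β') * hsum - 2 * hB2 + hC2 - hCc
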